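/- Absorption probabilities as potentials: set up the electric network from a Markov chain via D_{xy} = √(μ_x P_{xy} μ_y P_{yx}), γ_{xy} = √(μ_x P_{xy}/(μ_y P_{yx})). With disjoint nonempty sets A, B held at potentials U_A = 1 on A and U_B = 0 on B and all other vertices free, the unique solution potentials satisfy u_x = P_x{τ_A^0 < τ_B^0} for every x ∈ V, the probability that the chain started at x reaches A before B. -/

import Mathlib

open Finset

/-- Maximum principle: a function harmonic off a set `S`, vanishing on `S`,
on a connected graph with positive transition probabilities, is ≤ 0. -/
lemma max_principle_aux {V : Type*} [Fintype V] [DecidableEq V]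
    (G : V → V → Prop)
    (hconn : ∀ x y : V, Relation.ReflTransGen G x y)
    (P : V → V → ℝ)
    (hPpos : ∀ x y, G x y → 0 < P x y)
    (hPnn : ∀ x y, 0 ≤ P x y)
    (hProw : ∀ x, ∑ y, P x y = 1)
    (S : Finset V) (a : V) (ha : a ∈ S)
    (g : V → ℝ) (hgz : ∀ x ∈ S, g x = 0)
    (hgh : ∀ x ∉ S, g x = ∑ y, P x y * g y) :
    ∀ x, g x ≤ 0 := by
  obtain ⟨x0, -, hx0⟩ := Finset.exists_max_image Finset.univ g ⟨a, Finset.mem_univ a⟩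
  have hmax : ∀ x, g x ≤ g x0 := fun x => hx0 x (Finset.mem_univ x)
  suffices hM : g x0 ≤ 0 by intro x; exact (hmax x).trans hM
  have key : ∀ z, Relation.ReflTransGen G z a → g z = g x0 → g x0 ≤ 0 := by
    intro z hz
    induction hz using Relation.ReflTransGen.head_induction_on with
    | refl =>
      intro he; rw [hgz a ha] at he; exact he.ge
    | @head b c h' _ ih =>
      intro he
      by_cases hb : b ∈ S
      · rw [hgz b hb] at he; exact he.ge
      · have hsum : ∑ y, P b y * (g x0 - g y) = 0 := by
          have hb2 := hgh b hb
          simp only [mul_sub]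
          rw [Finset.sum_sub_distrib, ← Finset.sum_mul, hProw, one_mul, ← hb2, he, sub_self]
        have hterm := (Finset.sum_eq_zero_iff_of_nonneg
          (fun y _ => mul_nonneg (hPnn b y) (sub_nonneg.2 (hmax y)))).1 hsum c (Finset.mem_univ c)
        have hPc : 0 < P b c := hPpos b c h'
        have : g x0 - g c = 0 := by
          rcases mul_eq_zero.1 hterm with h0 | h0
          · exact absurd h0 hPc.ne'
          · exact h0
        exact ih (by linarith)
  exact key x0 (hconn x0 a) rfl

/-- the network potentials with boundary 1 on `A`, 0 on `B` equal the
absorption probabilities `h_x = P_x{τ_A⁰ < τ_B⁰}`, characterised as the unique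
function that is 1 on `A`, 0 on `B`, and harmonic for `P` elsewhere. -/
theorem potentials_are_absorption_probabilities {V : Type*} [Fintype V] [DecidableEq V]
    (G : V → V → Prop) [DecidableRel G]
    (hGsym : ∀ x y, G x y → G y x)
    (hconn : ∀ x y : V, Relation.ReflTransGen G x y)
    (P : V → V → ℝ) (μ : V → ℝ)
    (hPpos : ∀ x y, G x y → 0 < P x y)
    (hPzero : ∀ x y, ¬ G x y → P x y = 0)
    (hProw : ∀ x, ∑ y, P x y = 1)
    (hμpos : ∀ x, 0 < μ x)
    (hμsum : ∑ x, μ x = 1)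
    (hstat : ∀ y, ∑ x, μ x * P x y = μ y)
    (D γ : V → V → ℝ)
    (hD : ∀ x y, D x y = Real.sqrt (μ x * P x y * (μ y * P y x)))
    (hγ : ∀ x y, γ x y = Real.sqrt (μ x * P x y / (μ y * P y x)))
    (A B : Finset V) (hA : A.Nonempty) (hB : B.Nonempty) (hAB : Disjoint A B)
    -- the absorption probabilities h_x = P_x{τ_A⁰ < τ_B⁰}
    (h : V → ℝ)
    (hhA : ∀ x ∈ A, h x = 1) (hhB : ∀ x ∈ B, h x = 0)
    (hharm : ∀ x, x ∉ A ∪ B → h x = ∑ y, P x y * h y)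
    -- the network solution with boundary potentials 1 on A, 0 on B
    (u : V → ℝ) (i : V → V → ℝ)
    (hohm : ∀ x y, G x y → i x y = D x y * (γ y x * u x - γ x y * u y))
    (hkir : ∀ x, x ∉ A ∪ B → ∑ y ∈ univ.filter (fun y => G x y), i x y = 0)
    (huA : ∀ x ∈ A, u x = 1) (huB : ∀ x ∈ B, u x = 0) :
    ∀ x, u x = h x := by
  have hPnn : ∀ x y, 0 ≤ P x y := by
    intro x y
    by_cases hG : G x y
    · exact (hPpos x y hG).le
    · rw [hPzero x y hG]
  -- key identities: D x y * γ y x = μ y * P y x, D x y * γ x y = μ x * P x y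
  have hDγ1 : ∀ x y, G x y → D x y * γ y x = μ y * P y x := by
    intro x y hG
    have ha : 0 < μ x * P x y := mul_pos (hμpos x) (hPpos x y hG)
    have hb : 0 < μ y * P y x := mul_pos (hμpos y) (hPpos y x (hGsym x y hG))
    rw [hD, hγ, ← Real.sqrt_mul (by positivity)]
    rw [show μ x * P x y * (μ y * P y x) * (μ y * P y x / (μ x * P x y))
        = (μ y * P y x) ^ 2 by field_simp [(hμpos x).ne', (hPpos x y hG).ne'] <;> ring]
    exact Real.sqrt_sq hb.le
  have hDγ2 : ∀ x y, G x y → D x y * γ x y = μ x * P x y := by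
    intro x y hG
    have ha : 0 < μ x * P x y := mul_pos (hμpos x) (hPpos x y hG)
    have hb : 0 < μ y * P y x := mul_pos (hμpos y) (hPpos y x (hGsym x y hG))
    rw [hD, hγ, ← Real.sqrt_mul (by positivity)]
    rw [show μ x * P x y * (μ y * P y x) * (μ x * P x y / (μ y * P y x))
        = (μ x * P x y) ^ 2 by field_simp [(hμpos y).ne', (hPpos y x (hGsym x y hG)).ne'] <;> ring]
    exact Real.sqrt_sq ha.le
  -- `u` is harmonic off `A ∪ B`
  have hu_harm : ∀ x, x ∉ A ∪ B → u x = ∑ y, P x y * u y := by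
    intro x hx
    have hk := hkir x hx
    have hk1 : ∑ y ∈ univ.filter (fun y => G x y),
        (μ y * P y x * u x - μ x * P x y * u y) = 0 := by
      rw [← hk]
      refine Finset.sum_congr rfl ?_
      intro y hy
      rw [Finset.mem_filter] at hy
      rw [hohm x y hy.2, mul_sub, ← mul_assoc, ← mul_assoc, hDγ1 x y hy.2, hDγ2 x y hy.2]
    have hk2 : ∑ y, (μ y * P y x * u x - μ x * P x y * u y) = 0 := by
      rw [← hk1]
      symm
      apply Finset.sum_subset (Finset.filter_subset _ _)
      intro y _ hy
      rw [Finset.mem_filter] at hy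
      push_neg at hy
      have hG : ¬ G x y := hy (Finset.mem_univ y)
      have h1 : P x y = 0 := hPzero x y hG
      have h2 : P y x = 0 := hPzero y x (fun hc => hG (hGsym y x hc))
      rw [h1, h2]; ring
    rw [Finset.sum_sub_distrib] at hk2
    have hL : ∑ y, μ y * P y x * u x = μ x * u x := by
      rw [← Finset.sum_mul, hstat x]
    have hR : ∑ y, μ x * P x y * u y = μ x * ∑ y, P x y * u y := by
      rw [Finset.mul_sum]
      exact Finset.sum_congr rfl fun y _ => by ring
    rw [hL, hR] at hk2
    have hμx := (hμpos x).ne'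
    have : μ x * u x = μ x * ∑ y, P x y * u y := by linarith
    exact mul_left_cancel₀ hμx this
  -- the difference g = u - h vanishes on A ∪ B and is harmonic off it
  obtain ⟨a, haA⟩ := hA
  have haS : a ∈ A ∪ B := Finset.mem_union_left _ haA
  have hgz : ∀ x ∈ A ∪ B, u x - h x = 0 := by
    intro x hx
    rcases Finset.mem_union.1 hx with hxA | hxB
    · rw [huA x hxA, hhA x hxA, sub_self]
    · rw [huB x hxB, hhB x hxB, sub_self]
  have hgh : ∀ x ∉ A ∪ B, u x - h x = ∑ y, P x y * (u y - h y) := by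
    intro x hx
    simp only [mul_sub]
    rw [Finset.sum_sub_distrib, ← hu_harm x hx, ← hharm x hx]
  have h1 := max_principle_aux G hconn P hPpos hPnn hProw (A ∪ B) a haS
    (fun x => u x - h x) hgz hgh
  have h2 := max_principle_aux G hconn P hPpos hPnn hProw (A ∪ B) a haS
    (fun x => h x - u x) (fun x hx => show h x - u x = 0 by linarith [hgz x hx])
    (fun x hx => show h x - u x = _ by
      simp only [mul_sub]
      rw [Finset.sum_sub_distrib, ← hu_harm x hx, ← hharm x hx])
  intro x
  have hx1 : u x - h x ≤ 0 := h1 x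
  have hx2 : h x - u x ≤ 0 := h2 x
  linarith
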